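/- Let G = (V,E) be a finite simple graph, let M be a matching of G, and let k ≥ 1 be an integer. If G contains no M-augmenting path of length at most 2k−1, then (k+1)·|M| ≥ k·ν(G), i.e., |M| ≥ (k/(k+1))·ν(G). -/

import Mathlib

/-- A matching of a graph `G`: a set `M` of edges of `G`, no two of which share a vertex. -/
def IsMatchingSet {V : Type} (G : SimpleGraph V) (M : Set (Sym2 V)) : Prop :=
  M ⊆ G.edgeSet ∧ ∀ e ∈ M, ∀ f ∈ M, e ≠ f → ∀ v : V, ¬(v ∈ e ∧ v ∈ f)

/-- `ν(G)`: the maximum cardinality of a matching of the finite graph `G`. -/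
noncomputable def matchingNumber {V : Type} [Fintype V] (G : SimpleGraph V) : ℕ :=
  sSup {n : ℕ | ∃ M : Set (Sym2 V), IsMatchingSet G M ∧ M.ncard = n}

/-- A vertex is `M`-exposed if it is not an endpoint of any edge of `M`. -/
def Exposed {V : Type} (M : Set (Sym2 V)) (v : V) : Prop :=
  ∀ e ∈ M, v ∉ e

/-- An `M`-augmenting path: a simple path in `G` both of whose endpoints are `M`-exposed
and whose edges alternate between `E \ M` and `M` (starting and ending with edges not
in `M`, i.e. the `i`-th edge belongs to `M` iff `i` is odd). -/
def IsAugPath {V : Type} (G : SimpleGraph V) (M : Set (Sym2 V)) {u w : V}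
    (p : G.Walk u w) : Prop :=
  p.IsPath ∧ 0 < p.length ∧ Exposed M u ∧ Exposed M w ∧
    ∀ (i : ℕ) (h : i < p.edges.length), (p.edges[i] ∈ M ↔ i % 2 = 1)

open SimpleGraph

section Chain

attribute [local instance] Classical.propDecidable

variable {V : Type} {G : SimpleGraph V}

/-- `v` is covered by an edge of `F`. -/
def Cov (F : Set (Sym2 V)) (v : V) : Prop := ∃ u, s(v, u) ∈ F

/-- the partner of `v` in `F` (junk if not covered). -/
noncomputable def ptn (F : Set (Sym2 V)) (v : V) : V :=
  if h : Cov F v then h.choose else v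

lemma ptn_mem {F : Set (Sym2 V)} {v : V} (h : Cov F v) : s(v, ptn F v) ∈ F := by
  rw [ptn, dif_pos h]; exact h.choose_spec

lemma IsMatchingSet.unique {F : Set (Sym2 V)} (hF : IsMatchingSet G F) {v a b : V}
    (ha : s(v, a) ∈ F) (hb : s(v, b) ∈ F) : a = b := by
  by_contra hne
  exact hF.2 _ ha _ hb (fun h => hne (Sym2.congr_right.mp h)) v
    ⟨Sym2.mem_mk_left v a, Sym2.mem_mk_left v b⟩

lemma ptn_eq {F : Set (Sym2 V)} (hF : IsMatchingSet G F) {v u : V}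
    (h : s(v, u) ∈ F) : ptn F v = u :=
  hF.unique (ptn_mem ⟨u, h⟩) h

lemma IsMatchingSet.subset {F F' : Set (Sym2 V)} (hF : IsMatchingSet G F) (h : F' ⊆ F) :
    IsMatchingSet G F' :=
  ⟨fun e he => hF.1 (h he), fun e he f hf => hF.2 e (h he) f (h hf)⟩

variable (A B : Set (Sym2 V))

/-- Alternating chain: even steps use `A`-edges, odd steps `B`-edges. -/
noncomputable def chain (u : V) : ℕ → V
  | 0 => u
  | i + 1 => if i % 2 = 0 then ptn A (chain u i) else ptn B (chain u i)

/-- chain can continue at step `i`. -/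
def goodAt (u : V) (i : ℕ) : Prop :=
  (i % 2 = 0 → Cov A (chain A B u i)) ∧ (i % 2 = 1 → Cov B (chain A B u i))

variable {A B}

lemma chain_edge_even {u : V} {i : ℕ} (hg : goodAt A B u i) (hi : i % 2 = 0) :
    s(chain A B u i, chain A B u (i + 1)) ∈ A := by
  have h : chain A B u (i + 1) = ptn A (chain A B u i) := by rw [chain, if_pos hi]
  rw [h]; exact ptn_mem (hg.1 hi)

lemma chain_edge_odd {u : V} {i : ℕ} (hg : goodAt A B u i) (hi : i % 2 = 1) :
    s(chain A B u i, chain A B u (i + 1)) ∈ B := by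
  have h : chain A B u (i + 1) = ptn B (chain A B u i) := by
    rw [chain, if_neg (by omega)]
  rw [h]; exact ptn_mem (hg.2 hi)

lemma chain_back_even (hA : IsMatchingSet G A) {u : V} {i : ℕ}
    (hg : goodAt A B u i) (hi : i % 2 = 0) :
    ptn A (chain A B u (i + 1)) = chain A B u i :=
  ptn_eq hA (Sym2.eq_swap ▸ chain_edge_even hg hi)

lemma chain_back_odd (hB : IsMatchingSet G B) {u : V} {i : ℕ}
    (hg : goodAt A B u i) (hi : i % 2 = 1) :
    ptn B (chain A B u (i + 1)) = chain A B u i :=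
  ptn_eq hB (Sym2.eq_swap ▸ chain_edge_odd hg hi)

lemma chain_edge_mem {u : V} {i : ℕ} (hg : goodAt A B u i) :
    s(chain A B u i, chain A B u (i + 1)) ∈ A ∪ B := by
  rcases Nat.mod_two_eq_zero_or_one i with h | h
  · exact Or.inl (chain_edge_even hg h)
  · exact Or.inr (chain_edge_odd hg h)

lemma chain_inj (hA : IsMatchingSet G A) (hB : IsMatchingSet G B) {u : V}
    (hu : ¬ Cov B u) :
    ∀ j, (∀ t, t < j → goodAt A B u t) → ∀ i, i < j → chain A B u i ≠ chain A B u j := by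
  intro j
  induction j using Nat.strong_induction_on with
  | _ j IH =>
  intro hg i hij hEq
  obtain ⟨j', rfl⟩ : ∃ j', j = j' + 1 := ⟨j - 1, by omega⟩
  set c := chain A B u with hc
  have hgj : goodAt A B u j' := hg j' (by omega)
  by_cases hij' : i = j'
  · -- consecutive vertices are adjacent hence distinct
    have hadj : G.Adj (c j') (c (j' + 1)) := by
      rcases chain_edge_mem hgj with h | h
      · exact (mem_edgeSet G).mp (hA.1 h)
      · exact (mem_edgeSet G).mp (hB.1 h)
    rw [hij'] at hEq
    exact hadj.ne hEq
  have hij'' : i < j' := by omega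
  -- incoming edge at x = c (j'+1) = c i
  rcases Nat.mod_two_eq_zero_or_one j' with hj | hj
  · -- incoming edge in A
    have hin : s(c (j' + 1), c j') ∈ A := Sym2.eq_swap ▸ chain_edge_even hgj hj
    rw [← hEq] at hin
    rcases Nat.mod_two_eq_zero_or_one i with hi | hi
    · -- outgoing edge at i also in A
      have hout : s(c i, c (i + 1)) ∈ A := chain_edge_even (hg i (by omega)) hi
      have : c j' = c (i + 1) := hA.unique hin hout
      have h1 : i + 1 < j' := by omega
      exact IH j' (by omega) (fun t ht => hg t (by omega)) (i + 1) h1 this.symm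
    · -- i odd
      rcases Nat.eq_zero_or_pos i with rfl | hi0
      · simp at hi
      · -- previous edge at i in A (since i-1 even)
        have hgp : goodAt A B u (i - 1) := hg (i - 1) (by omega)
        have hprev : s(c (i - 1), c (i - 1 + 1)) ∈ A :=
          chain_edge_even hgp (by omega)
        have hi1 : i - 1 + 1 = i := by omega
        rw [hi1] at hprev
        have hprev' : s(c i, c (i - 1)) ∈ A := Sym2.eq_swap ▸ hprev
        have : c j' = c (i - 1) := hA.unique hin hprev'
        exact IH j' (by omega) (fun t ht => hg t (by omega)) (i - 1) (by omega) this.symm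
  · -- incoming edge in B
    have hin : s(c (j' + 1), c j') ∈ B := Sym2.eq_swap ▸ chain_edge_odd hgj hj
    rw [← hEq] at hin
    rcases Nat.mod_two_eq_zero_or_one i with hi | hi
    · rcases Nat.eq_zero_or_pos i with rfl | hi0
      · exact hu ⟨c j', hin⟩
      · have hgp : goodAt A B u (i - 1) := hg (i - 1) (by omega)
        have hprev : s(c (i - 1), c (i - 1 + 1)) ∈ B :=
          chain_edge_odd hgp (by omega)
        have hi1 : i - 1 + 1 = i := by omega
        rw [hi1] at hprev
        have hprev' : s(c i, c (i - 1)) ∈ B := Sym2.eq_swap ▸ hprev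
        have : c j' = c (i - 1) := hB.unique hin hprev'
        exact IH j' (by omega) (fun t ht => hg t (by omega)) (i - 1) (by omega) this.symm
    · have hout : s(c i, c (i + 1)) ∈ B := chain_edge_odd (hg i (by omega)) hi
      have : c j' = c (i + 1) := hB.unique hin hout
      have h1 : i + 1 < j' := by omega
      exact IH j' (by omega) (fun t ht => hg t (by omega)) (i + 1) h1 this.symm

lemma exists_bad [Fintype V] (hA : IsMatchingSet G A) (hB : IsMatchingSet G B) {u : V}
    (hu : ¬ Cov B u) : ∃ i, ¬ goodAt A B u i := by
  by_contra h
  push_neg at h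
  have hinj : Function.Injective (fun t : Fin (Fintype.card V + 1) => chain A B u t) := by
    intro a b hab
    by_contra hne
    rcases lt_or_gt_of_ne (fun h' : (a : ℕ) = b => hne (Fin.ext h')) with hlt | hlt
    · exact chain_inj hA hB hu b (fun t _ => h t) a hlt hab
    · exact chain_inj hA hB hu a (fun t _ => h t) b hlt hab.symm
  have := Fintype.card_le_of_injective _ hinj
  simp [Fintype.card_fin] at this

lemma chain_trace_le (hA : IsMatchingSet G A) (hB : IsMatchingSet G B) {u u' : V}
    (hu : ¬ Cov B u) {p p' : ℕ}
    (hgp : ∀ t, t < p → goodAt A B u t) (hgp' : ∀ t, t < p' → goodAt A B u' t)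
    (hle : p ≤ p') (hpar : p % 2 = p' % 2)
    (heq : chain A B u p = chain A B u' p') : p = p' ∧ u = u' := by
  have claim : ∀ t, t ≤ p → chain A B u (p - t) = chain A B u' (p' - t) := by
    intro t
    induction t with
    | zero => intro _; simpa using heq
    | succ t IHt =>
      intro ht
      have hprev := IHt (by omega)
      have hq1 : 1 ≤ p - t := by omega
      have hq1' : 1 ≤ p' - t := by omega
      rcases Nat.mod_two_eq_zero_or_one (p - t - 1) with hq | hq
      · have e1 := chain_back_even hA (hgp (p - t - 1) (by omega)) hq
        have e2 := chain_back_even hA (hgp' (p' - t - 1) (by omega)) (by omega)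
        rw [show p - t - 1 + 1 = p - t by omega] at e1
        rw [show p' - t - 1 + 1 = p' - t by omega] at e2
        rw [show p - (t + 1) = p - t - 1 by omega, show p' - (t + 1) = p' - t - 1 by omega]
        rw [← e1, ← e2, hprev]
      · have e1 := chain_back_odd hB (hgp (p - t - 1) (by omega)) hq
        have e2 := chain_back_odd hB (hgp' (p' - t - 1) (by omega)) (by omega)
        rw [show p - t - 1 + 1 = p - t by omega] at e1
        rw [show p' - t - 1 + 1 = p' - t by omega] at e2
        rw [show p - (t + 1) = p - t - 1 by omega, show p' - (t + 1) = p' - t - 1 by omega]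
        rw [← e1, ← e2, hprev]
  have h0 := claim p le_rfl
  rw [Nat.sub_self] at h0
  have hu0 : chain A B u 0 = u := rfl
  rw [hu0] at h0
  by_cases hpp : p = p'
  · subst hpp
    rw [Nat.sub_self] at h0
    exact ⟨rfl, h0⟩
  · exfalso
    have hq : 1 ≤ p' - p := by omega
    have hqe : (p' - p) % 2 = 0 := by omega
    have hgq := hgp' (p' - p - 1) (by omega)
    have hedge := chain_edge_odd hgq (by omega)
    rw [show p' - p - 1 + 1 = p' - p by omega, ← h0] at hedge
    exact hu ⟨chain A B u' (p' - p - 1), Sym2.eq_swap ▸ hedge⟩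

lemma chain_trace (hA : IsMatchingSet G A) (hB : IsMatchingSet G B) {u u' : V}
    (hu : ¬ Cov B u) (hu' : ¬ Cov B u') {p p' : ℕ}
    (hgp : ∀ t, t < p → goodAt A B u t) (hgp' : ∀ t, t < p' → goodAt A B u' t)
    (hpar : p % 2 = p' % 2)
    (heq : chain A B u p = chain A B u' p') : p = p' ∧ u = u' := by
  rcases le_total p p' with h | h
  · exact chain_trace_le hA hB hu hgp hgp' h hpar heq
  · obtain ⟨h1, h2⟩ := chain_trace_le hA hB hu' hgp' hgp h hpar.symm heq.symm
    exact ⟨h1.symm, h2.symm⟩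

end Chain

section Walks

variable {V : Type} {G : SimpleGraph V}

/-- Build a walk along a chain of adjacent vertices. -/
def chainWalk (G : SimpleGraph V) (c : ℕ → V) :
    (m : ℕ) → (i : ℕ) → (∀ t, t < m → G.Adj (c (i + t)) (c (i + t + 1))) →
      G.Walk (c i) (c (i + m))
  | 0, i, _ => Walk.nil.copy rfl (congrArg c (by omega))
  | m + 1, i, h =>
      (Walk.cons (by simpa using h 0 (Nat.succ_pos m))
        (chainWalk G c m (i + 1) (fun t ht => by
          have h2 := h (t + 1) (by omega)
          rw [show i + (t + 1) = i + 1 + t by omega] at h2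
          exact h2))).copy rfl (congrArg c (by omega))

lemma chainWalk_length (c : ℕ → V) :
    ∀ (m i : ℕ) (h : ∀ t, t < m → G.Adj (c (i + t)) (c (i + t + 1))),
      (chainWalk G c m i h).length = m := by
  intro m
  induction m with
  | zero => intro i h; simp [chainWalk]
  | succ m IH => intro i h; simp [chainWalk, IH]

lemma chainWalk_support (c : ℕ → V) :
    ∀ (m i : ℕ) (h : ∀ t, t < m → G.Adj (c (i + t)) (c (i + t + 1))),
      (chainWalk G c m i h).support = (List.range (m + 1)).map (fun t => c (i + t)) := by
  intro m
  induction m with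
  | zero => intro i h; simp [chainWalk, List.range_succ]
  | succ m IH =>
    intro i h
    simp only [chainWalk, Walk.support_copy, Walk.support_cons, IH]
    conv_rhs => rw [List.range_succ_eq_map, List.map_cons, List.map_map]
    congr 1
    refine List.map_congr_left fun a _ => ?_
    show c (i + 1 + a) = c (i + (a + 1))
    rw [show i + 1 + a = i + (a + 1) from by omega]

lemma chainWalk_edges (c : ℕ → V) :
    ∀ (m i : ℕ) (h : ∀ t, t < m → G.Adj (c (i + t)) (c (i + t + 1))),
      (chainWalk G c m i h).edges
        = (List.range m).map (fun t => s(c (i + t), c (i + t + 1))) := by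
  intro m
  induction m with
  | zero => intro i h; simp [chainWalk]
  | succ m IH =>
    intro i h
    simp only [chainWalk, Walk.edges_copy, Walk.edges_cons, IH]
    conv_rhs => rw [List.range_succ_eq_map, List.map_cons, List.map_map]
    congr 1
    refine List.map_congr_left fun a _ => ?_
    show s(c (i + 1 + a), c (i + 1 + a + 1)) = s(c (i + (a + 1)), c (i + (a + 1) + 1))
    rw [show i + 1 + a = i + (a + 1) from by omega]

end Walks

section Cards

variable {V : Type} [Fintype V] {G : SimpleGraph V}

attribute [local instance] Classical.propDecidable

lemma two_card (e : Sym2 V) (he : ¬ e.IsDiag) :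
    (Finset.univ.filter (· ∈ e)).card = 2 := by
  induction e using Sym2.inductionOn with
  | _ a b =>
    have hab : a ≠ b := fun h => he (Sym2.mk_isDiag_iff.mpr h)
    have : Finset.univ.filter (· ∈ s(a, b)) = {a, b} := by
      ext v; simp [Sym2.mem_iff]
    rw [this, Finset.card_pair hab]

/-- The set of (edge, endpoint) pairs of `F`. -/
noncomputable def pairFinset (F : Set (Sym2 V)) : Finset (Σ _ : Sym2 V, V) :=
  F.toFinset.sigma (fun e => Finset.univ.filter (· ∈ e))

lemma pairFinset_card {F : Set (Sym2 V)} (hF : F ⊆ G.edgeSet) :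
    (pairFinset F).card = 2 * F.ncard := by
  rw [pairFinset, Finset.card_sigma, Set.ncard_eq_toFinset_card']
  rw [Finset.sum_congr rfl
    (fun e he => two_card e (G.not_isDiag_of_mem_edgeSet (hF (Set.mem_toFinset.mp he))))]
  simp [mul_comm]

lemma cov_card {F : Set (Sym2 V)} (hF : IsMatchingSet G F) :
    (Finset.univ.filter (fun v => Cov F v)).card = 2 * F.ncard := by
  rw [← pairFinset_card hF.1]
  have himg : (pairFinset F).image (fun p => p.2) = Finset.univ.filter (fun v => Cov F v) := by
    ext v
    simp only [pairFinset, Finset.mem_image, Finset.mem_sigma, Finset.mem_filter,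
      Finset.mem_univ, true_and, Set.mem_toFinset]
    constructor
    · rintro ⟨⟨e, w⟩, ⟨he, hw⟩, rfl⟩
      obtain ⟨y, hy⟩ := Sym2.mem_iff_exists.mp hw
      exact ⟨y, hy ▸ he⟩
    · rintro ⟨y, hy⟩
      exact ⟨⟨s(v, y), v⟩, ⟨hy, Sym2.mem_mk_left v y⟩, rfl⟩
  rw [← himg, Finset.card_image_of_injOn]
  rintro ⟨e, v⟩ hp ⟨e', v'⟩ hq hpq
  simp only at hpq
  subst hpq
  simp only [pairFinset, Finset.coe_sigma, Finset.mem_coe, Finset.mem_sigma, Finset.mem_filter,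
    Set.mem_toFinset, Set.mem_sigma_iff] at hp hq
  have he : e = e' := by
    by_contra hne
    exact hF.2 e hp.1 e' hq.1 hne v ⟨hp.2.2, hq.2.2⟩
  subst he
  rfl

end Cards

/-- Let `G` be a finite simple graph, `M` a matching of `G`, and `k ≥ 1`.
If `G` contains no `M`-augmenting path of length at most `2k − 1`, then
`(k+1) · |M| ≥ k · ν(G)`. -/
theorem stmt_7 (V : Type) [Fintype V] (G : SimpleGraph V)
    (M : Set (Sym2 V)) (hM : IsMatchingSet G M) (k : ℕ) (hk : 1 ≤ k)
    (hno : ∀ (u w : V) (p : G.Walk u w), IsAugPath G M p → ¬(p.length ≤ 2 * k - 1)) :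
    k * matchingNumber G ≤ (k + 1) * M.ncard := by
  classical
  -- a maximum matching N
  have hmem : matchingNumber G ∈
      {n : ℕ | ∃ M : Set (Sym2 V), IsMatchingSet G M ∧ M.ncard = n} := by
    apply Nat.sSup_mem
    · exact ⟨0, ∅, ⟨Set.empty_subset _, by simp⟩, by simp⟩
    · refine ⟨Fintype.card (Sym2 V), ?_⟩
      rintro n ⟨F, hF, rfl⟩
      have := Set.ncard_le_ncard (Set.subset_univ F) Set.finite_univ
      simpa [Set.ncard_univ, Nat.card_eq_fintype_card] using this
  obtain ⟨N, hN, hNν⟩ := hmem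
  set A : Set (Sym2 V) := N \ M with hA_def
  set B : Set (Sym2 V) := M \ N with hB_def
  have hAm : IsMatchingSet G A := hN.subset Set.diff_subset
  have hBm : IsMatchingSet G B := hM.subset Set.diff_subset
  -- vertices covered by A but not B are M-exposed
  have hexp : ∀ v : V, Cov A v → ¬ Cov B v → Exposed M v := by
    rintro v ⟨a, ha⟩ hB' e he hv
    obtain ⟨y, rfl⟩ := Sym2.mem_iff_exists.mp hv
    by_cases hn : s(v, y) ∈ N
    · have : y = a := hN.unique hn ha.1
      subst this
      exact ha.2 he
    · exact hB' ⟨y, ⟨he, hn⟩⟩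
  -- chain stopping time
  have hex : ∀ u : V, ∃ L : ℕ, ¬ Cov B u →
      ((∀ t, t < L → goodAt A B u t) ∧ ¬ goodAt A B u L) := by
    intro u
    by_cases hu : Cov B u
    · exact ⟨0, fun h => absurd hu h⟩
    · have h' : ∃ i, ¬ goodAt A B u i := exists_bad hAm hBm hu
      refine ⟨Nat.find h', fun _ => ⟨fun t ht => ?_, Nat.find_spec h'⟩⟩
      by_contra hg
      exact Nat.find_min h' ht hg
  choose Lf hLf using hex
  -- basic facts for chain starts
  have hLpos : ∀ u : V, Cov A u → ¬ Cov B u → 1 ≤ Lf u := by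
    intro u hca hcb
    rcases Nat.eq_zero_or_pos (Lf u) with h0 | h; swap
    · exact h
    exfalso
    exact (hLf u hcb).2 (h0 ▸ ⟨fun _ => hca, fun h1 => by omega⟩)
  -- the finsets
  set X : Finset V := Finset.univ.filter (fun v => Cov A v) with hX_def
  set Y : Finset V := Finset.univ.filter (fun v => Cov B v) with hY_def
  set Sf : Finset V := X \ Y with hSf_def
  set Tf : Finset V := Y \ X with hTf_def
  have hSf_mem : ∀ v : V, v ∈ Sf ↔ Cov A v ∧ ¬ Cov B v := by
    intro v; simp [hSf_def, hX_def, hY_def]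
  have hTf_mem : ∀ v : V, v ∈ Tf ↔ Cov B v ∧ ¬ Cov A v := by
    intro v; simp [hTf_def, hX_def, hY_def]
  set SA : Finset V := Sf.filter (fun u => Lf u % 2 = 1) with hSA_def
  set ST : Finset V := Sf.filter (fun u => ¬ Lf u % 2 = 1) with hST_def
  -- augmenting chains are long
  have haug : ∀ u ∈ SA, 2 * k + 1 ≤ Lf u := by
    intro u hu
    rw [hSA_def, Finset.mem_filter] at hu
    obtain ⟨huS, hodd⟩ := hu
    rw [hSf_mem] at huS
    obtain ⟨hca, hcb⟩ := huS
    obtain ⟨hgood, hbad⟩ := hLf u hcb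
    set c : ℕ → V := chain A B u with hc_def
    set L : ℕ := Lf u with hL_def
    have hadj : ∀ t, t < L → G.Adj (c (0 + t)) (c (0 + t + 1)) := by
      intro t ht
      simp only [Nat.zero_add]
      rcases chain_edge_mem (hgood t ht) with h | h
      · exact (mem_edgeSet G).mp (hAm.1 h)
      · exact (mem_edgeSet G).mp (hBm.1 h)
    set W : G.Walk (c 0) (c (0 + L)) := chainWalk G c L 0 hadj with hW_def
    have hlen : W.length = L := chainWalk_length c L 0 hadj
    have hL1 : 1 ≤ L := hLpos u hca hcb
    -- endpoint facts
    have hnBw : ¬ Cov B (c L) := by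
      intro hcb'
      exact hbad ⟨fun h0 => by omega, fun _ => hcb'⟩
    have hCovAw : Cov A (c L) := by
      have hg := hgood (L - 1) (by omega)
      have he := chain_edge_even hg (by omega)
      rw [show L - 1 + 1 = L from by omega] at he
      exact ⟨c (L - 1), Sym2.eq_swap ▸ he⟩
    have hpath : W.IsPath := by
      rw [SimpleGraph.Walk.isPath_def, hW_def, chainWalk_support]
      refine List.Nodup.map_on ?_ List.nodup_range
      intro x hx y hy hxy
      simp only [List.mem_range] at hx hy
      simp only [Nat.zero_add] at hxy
      by_contra hne
      rcases lt_or_gt_of_ne hne with hlt | hlt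
      · exact chain_inj hAm hBm hcb y (fun t ht => hgood t (by omega)) x hlt hxy
      · exact chain_inj hAm hBm hcb x (fun t ht => hgood t (by omega)) y hlt hxy.symm
    have hedges : W.edges = (List.range L).map (fun t => s(c (0 + t), c (0 + t + 1))) :=
      chainWalk_edges c L 0 hadj
    have hiaug : IsAugPath G M W := by
      refine ⟨hpath, by omega, ?_, ?_, ?_⟩
      · exact hexp u hca hcb
      · rw [show 0 + L = L from by omega]
        exact hexp (c L) hCovAw hnBw
      · intro i hi
        have hiL : i < L := by
          have := hi
          rw [hedges] at this
          simpa using this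
        have hgi := hgood i hiL
        have hget : W.edges[i] = s(c i, c (i + 1)) := by
          simp [hedges]
        rw [hget]
        constructor
        · intro hmem
          by_contra h1
          have h0 : i % 2 = 0 := by omega
          exact (chain_edge_even hgi h0).2 hmem
        · intro h1
          exact (chain_edge_odd hgi h1).1
    have := hno _ _ W hiaug
    rw [hlen] at this
    omega
  -- cardinality bookkeeping
  have hX_card : X.card = 2 * A.ncard := cov_card hAm
  have hY_card : Y.card = 2 * B.ncard := cov_card hBm
  have h1 := Finset.card_sdiff_add_card X Y
  have h2 := Finset.card_sdiff_add_card Y X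
  rw [Finset.union_comm] at h2
  have cS : Sf.card + Y.card = Tf.card + X.card := by
    rw [hSf_def, hTf_def]; omega
  have cSplit : SA.card + ST.card = Sf.card := by
    rw [hSA_def, hST_def]
    exact Finset.card_filter_add_card_filter_not _
  -- even-ending chains inject into Tf
  have cST : ST.card ≤ Tf.card := by
    refine Finset.card_le_card_of_injOn (fun u => chain A B u (Lf u)) ?_ ?_
    · intro u hu
      rw [Finset.mem_coe, hST_def, Finset.mem_filter] at hu
      obtain ⟨huS, heven⟩ := hu
      rw [hSf_mem] at huS
      obtain ⟨hca, hcb⟩ := huS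
      obtain ⟨hgood, hbad⟩ := hLf u hcb
      have hL1 : 1 ≤ Lf u := hLpos u hca hcb
      rw [Finset.mem_coe, hTf_mem]
      constructor
      · have hg := hgood (Lf u - 1) (by omega)
        have he := chain_edge_odd hg (by omega)
        rw [show Lf u - 1 + 1 = Lf u from by omega] at he
        exact ⟨chain A B u (Lf u - 1), Sym2.eq_swap ▸ he⟩
      · intro hca'
        exact hbad ⟨fun _ => hca', fun h1 => by omega⟩
    · intro u hu u' hu' heq
      have hu1 := Finset.mem_coe.mp hu
      have hu1' := Finset.mem_coe.mp hu'
      rw [hST_def, Finset.mem_filter, hSf_mem] at hu1 hu1'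
      obtain ⟨⟨hca, hcb⟩, hev⟩ := hu1
      obtain ⟨⟨hca', hcb'⟩, hev'⟩ := hu1'
      exact (chain_trace hAm hBm hcb hcb' (hLf u hcb).1 (hLf u' hcb').1
        (by omega) heq).2
  -- augmenting chains give many B-edges
  have cSA : k * SA.card ≤ 2 * B.ncard := by
    have htarget : (pairFinset B).card = 2 * B.ncard := pairFinset_card hBm.1
    have hdom : (SA ×ˢ (Finset.univ : Finset (Fin k))).card = SA.card * k := by
      rw [Finset.card_product, Finset.card_univ, Fintype.card_fin]
    have key : (SA ×ˢ (Finset.univ : Finset (Fin k))).card ≤ (pairFinset B).card := by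
      refine Finset.card_le_card_of_injOn
        (fun q => ⟨s(chain A B q.1 (2 * (q.2 : ℕ) + 1), chain A B q.1 (2 * (q.2 : ℕ) + 2)),
          chain A B q.1 (2 * (q.2 : ℕ) + 1)⟩) ?_ ?_
      · rintro ⟨u, j⟩ hq
        rw [Finset.mem_coe, Finset.mem_product] at hq
        have huSA := hq.1
        have hL := haug u huSA
        rw [hSA_def, Finset.mem_filter, hSf_mem] at huSA
        obtain ⟨⟨hca, hcb⟩, hodd⟩ := huSA
        obtain ⟨hgood, _⟩ := hLf u hcb
        have hj : (j : ℕ) < k := j.isLt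
        have hlt : 2 * (j : ℕ) + 1 < Lf u := by omega
        have he := chain_edge_odd (hgood _ hlt) (by omega)
        rw [show 2 * (j : ℕ) + 1 + 1 = 2 * (j : ℕ) + 2 from by omega] at he
        rw [Finset.mem_coe, pairFinset, Finset.mem_sigma]
        refine ⟨?_, ?_⟩
        · simp only [Set.mem_toFinset]; exact he
        · simp [Sym2.mem_mk_left]
      · rintro ⟨u, j⟩ hq ⟨u', j'⟩ hq' heq
        have hq1 := (Finset.mem_product.mp (Finset.mem_coe.mp hq)).1
        have hq1' := (Finset.mem_product.mp (Finset.mem_coe.mp hq')).1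
        have hL := haug u hq1
        have hL' := haug u' hq1'
        rw [hSA_def, Finset.mem_filter, hSf_mem] at hq1 hq1'
        obtain ⟨⟨hca, hcb⟩, hodd⟩ := hq1
        obtain ⟨⟨hca', hcb'⟩, hodd'⟩ := hq1'
        have hj : (j : ℕ) < k := j.isLt
        have hj' : (j' : ℕ) < k := j'.isLt
        have hsnd : chain A B u (2 * (j : ℕ) + 1) = chain A B u' (2 * (j' : ℕ) + 1) :=
          congrArg (fun p : (Σ _ : Sym2 V, V) => p.2) heq
        have htr := chain_trace hAm hBm hcb hcb'
          (fun t ht => (hLf u hcb).1 t (by omega))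
          (fun t ht => (hLf u' hcb').1 t (by omega)) (by omega) hsnd
        obtain ⟨hjj, huu⟩ := htr
        subst huu
        have hj2 : j = j' := Fin.ext (by omega)
        exact congrArg (Prod.mk u) hj2
    calc k * SA.card = SA.card * k := Nat.mul_comm _ _
      _ = (SA ×ˢ (Finset.univ : Finset (Fin k))).card := hdom.symm
      _ ≤ (pairFinset B).card := key
      _ = 2 * B.ncard := htarget
  -- splitting N and M
  have hsplitN : (N ∩ M).ncard + A.ncard = N.ncard :=
    Set.ncard_inter_add_ncard_diff_eq_ncard N M
  have hsplitM : (M ∩ N).ncard + B.ncard = M.ncard :=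
    Set.ncard_inter_add_ncard_diff_eq_ncard M N
  -- final arithmetic
  have e1 : 2 * A.ncard ≤ 2 * B.ncard + SA.card := by omega
  have e2 : 2 * (k * A.ncard) ≤ 2 * ((k + 1) * B.ncard) := by
    calc 2 * (k * A.ncard) = k * (2 * A.ncard) := by ring
      _ ≤ k * (2 * B.ncard + SA.card) := Nat.mul_le_mul_left k e1
      _ = 2 * (k * B.ncard) + k * SA.card := by ring
      _ ≤ 2 * (k * B.ncard) + 2 * B.ncard := Nat.add_le_add_left cSA _
      _ = 2 * ((k + 1) * B.ncard) := by ring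
  have hAB : k * A.ncard ≤ (k + 1) * B.ncard :=
    Nat.le_of_mul_le_mul_left e2 (by norm_num)
  rw [← hNν]
  calc k * N.ncard = k * A.ncard + k * (N ∩ M).ncard := by rw [← hsplitN]; ring
    _ ≤ (k + 1) * B.ncard + (k + 1) * (N ∩ M).ncard :=
        Nat.add_le_add hAB (Nat.mul_le_mul (by omega) (le_refl _))
    _ = (k + 1) * M.ncard := by rw [Set.inter_comm N M, ← hsplitM]; ring
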